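/- (Theorem 1, parts 2 and 3.) Let V : ℝ → ℝ be a continuously differentiable, convex, nonnegative potential, let k ∈ {0, −1}, and let θ, σ, φ, ψ, b be differentiable real-valued functions on [t₀, ∞) with b > 0 satisfying the Einstein–Klein–Gordon evolution system, the relation b'/b = (θ − √3σ)/3, and the constraint equation (1/3)θ² + k/b² = σ² + V(φ) + ψ²/2 at every time, with θ(t₀) ≥ 0. Then as t → ∞: σ(t) → 0, ψ(t) → 0, k/b(t)² → 0, and θ(t) → √(3V₀), where V₀ = inf_{x∈ℝ} V(x) is the infimum (minimum) of the potential. In particular, for the exponential potential V(x) = V₀′e^{−λx} with V₀′ > 0 and λ > 0 one has θ(t) → 0. -/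

import Mathlib

open Set Filter

/-- antitone from nonpositive derivative on a right half-line -/
lemma thm1aux_antitoneOn_Ici {a : ℝ} {f : ℝ → ℝ}
    (hd : ∀ t ∈ Set.Ici a, DifferentiableAt ℝ f t)
    (h : ∀ t ∈ Set.Ici a, deriv f t ≤ 0) : AntitoneOn f (Set.Ici a) := by
  refine antitoneOn_of_deriv_nonpos (convex_Ici a)
    (fun t ht => (hd t ht).continuousAt.continuousWithinAt)
    (fun t ht => ?_) (fun t ht => ?_)
  · rw [interior_Ici] at ht
    exact (hd t (Set.Ioi_subset_Ici_self ht)).differentiableWithinAt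
  · rw [interior_Ici] at ht
    exact h t (Set.Ioi_subset_Ici_self ht)

lemma thm1aux_monotoneOn_Ici {a : ℝ} {f : ℝ → ℝ}
    (hd : ∀ t ∈ Set.Ici a, DifferentiableAt ℝ f t)
    (h : ∀ t ∈ Set.Ici a, 0 ≤ deriv f t) : MonotoneOn f (Set.Ici a) := by
  refine monotoneOn_of_deriv_nonneg (convex_Ici a)
    (fun t ht => (hd t ht).continuousAt.continuousWithinAt)
    (fun t ht => ?_) (fun t ht => ?_)
  · rw [interior_Ici] at ht
    exact (hd t (Set.Ioi_subset_Ici_self ht)).differentiableWithinAt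
  · rw [interior_Ici] at ht
    exact h t (Set.Ioi_subset_Ici_self ht)

/-- A function with derivative ≤ -m < 0 on a half-line cannot tend to 0. -/
lemma thm1aux_diverge {T m : ℝ} (hm : 0 < m) {f : ℝ → ℝ}
    (hd : ∀ t ∈ Set.Ici T, DifferentiableAt ℝ f t)
    (hder : ∀ t ∈ Set.Ici T, deriv f t ≤ -m)
    (h0 : Filter.Tendsto f Filter.atTop (nhds 0)) : False := by
  have hdg : ∀ t ∈ Set.Ici T, DifferentiableAt ℝ (fun t => f t + m * t) t :=
    fun t ht => (hd t ht).add ((differentiableAt_fun_id.const_mul m))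
  have hanti : AntitoneOn (fun t => f t + m * t) (Set.Ici T) := by
    refine thm1aux_antitoneOn_Ici hdg (fun t ht => ?_)
    have : deriv (fun t => f t + m * t) t = deriv f t + m := by
      rw [deriv_fun_add (hd t ht) (differentiableAt_fun_id.const_mul m),
        deriv_const_mul _ differentiableAt_fun_id, deriv_id'']
      ring
    rw [this]
    linarith [hder t ht]
  have h1 := (Metric.tendsto_nhds.mp h0 1 one_pos)
  rw [eventually_atTop] at h1
  obtain ⟨N, hN⟩ := h1
  set t := max N (max T (T + (f T + 1) / m)) with ht_def
  have htT : T ≤ t := le_trans (le_max_left _ _) (le_max_right _ _)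
  have htN : N ≤ t := le_max_left _ _
  have htm : T + (f T + 1) / m ≤ t := le_trans (le_max_right _ _) (le_max_right _ _)
  have h2 : f t + m * t ≤ f T + m * T :=
    hanti (self_mem_Ici : T ∈ Set.Ici T) htT htT
  have h3 : (f T + 1) / m ≤ t - T := by linarith
  have h4 : f T + 1 ≤ m * (t - T) := by
    rw [div_le_iff₀ hm] at h3; linarith [h3]
  have h5 := hN t htN
  rw [Real.dist_eq, sub_zero] at h5
  have h6 : f t ≤ -1 := by nlinarith
  have h7 : -1 < f t := neg_lt_of_abs_lt h5
  linarith

/-- derivative of a nonnegative convex function is bounded on sublevel sets -/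
lemma thm1aux_convex_deriv_bound (V : ℝ → ℝ) (hd : ∀ x, DifferentiableAt ℝ V x)
    (hconv : ConvexOn ℝ Set.univ V) (hVnn : ∀ x, 0 ≤ V x) (c : ℝ) :
    ∃ K, 0 ≤ K ∧ ∀ x, V x ≤ c → |deriv V x| ≤ K := by
  have hmono : ∀ x y : ℝ, x ≤ y → deriv V x ≤ deriv V y := fun x y h =>
    hconv.monotoneOn_deriv (fun z _ => hd z) (Set.mem_univ x) (Set.mem_univ y) h
  have hsupp : ∀ x y : ℝ, V x + deriv V x * (y - x) ≤ V y := by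
    intro x y
    rcases lt_trichotomy x y with h | h | h
    · have hs := hconv.deriv_le_slope (Set.mem_univ x) (Set.mem_univ y) h (hd x)
      rw [slope_def_field] at hs
      have hpos : (0:ℝ) < y - x := sub_pos.2 h
      rw [le_div_iff₀ hpos] at hs
      nlinarith [hs]
    · subst h; simp
    · have hs := hconv.slope_le_deriv (Set.mem_univ y) (Set.mem_univ x) h (hd x)
      rw [slope_def_field] at hs
      have hpos : (0:ℝ) < x - y := sub_pos.2 h
      rw [div_le_iff₀ hpos] at hs
      nlinarith [hs]
  obtain ⟨u, hu⟩ : ∃ u, ∀ x, V x ≤ c → deriv V x ≤ u := by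
    by_cases hp : ∃ x₁, V x₁ ≤ c ∧ 0 < deriv V x₁
    · obtain ⟨x₁, hx₁c, hx₁p⟩ := hp
      refine ⟨deriv V (x₁ + (c + 1) / deriv V x₁), fun x hx => ?_⟩
      have hc0 : 0 ≤ c := le_trans (hVnn x₁) hx₁c
      have hxz : x ≤ x₁ + (c + 1) / deriv V x₁ := by
        by_contra hgt
        push_neg at hgt
        have h2 : (c + 1) / deriv V x₁ < x - x₁ := by linarith
        rw [div_lt_iff₀ hx₁p] at h2
        have h3 := hsupp x₁ x
        nlinarith [hVnn x₁]
      exact hmono _ _ hxz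
    · push_neg at hp
      exact ⟨0, fun x hx => hp x hx⟩
  obtain ⟨l, hl⟩ : ∃ l, ∀ x, V x ≤ c → l ≤ deriv V x := by
    by_cases hp : ∃ x₁, V x₁ ≤ c ∧ deriv V x₁ < 0
    · obtain ⟨x₁, hx₁c, hx₁p⟩ := hp
      refine ⟨deriv V (x₁ - (c + 1) / (-deriv V x₁)), fun x hx => ?_⟩
      have hc0 : 0 ≤ c := le_trans (hVnn x₁) hx₁c
      have hp2 : 0 < -deriv V x₁ := by linarith
      have hxz : x₁ - (c + 1) / (-deriv V x₁) ≤ x := by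
        by_contra hgt
        push_neg at hgt
        have h2 : x - x₁ < -((c + 1) / (-deriv V x₁)) := by linarith
        have h3 : (-deriv V x₁) * (x - x₁) < -(c+1) := by
          have := (div_lt_iff₀ hp2).mp (by linarith : (c+1)/(-deriv V x₁) < -(x - x₁))
          nlinarith
        have h4 := hsupp x₁ x
        nlinarith [hVnn x₁]
      exact hmono _ _ hxz
    · push_neg at hp
      exact ⟨0, fun x hx => hp x hx⟩
  refine ⟨|u| + |l|, by positivity, fun x hx => ?_⟩
  rw [abs_le]
  constructor
  · have := hl x hx
    have h1 : -|l| ≤ l := neg_abs_le l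
    have h2 : (0:ℝ) ≤ |u| := abs_nonneg u
    linarith
  · have := hu x hx
    have h1 : u ≤ |u| := le_abs_self u
    have h2 : (0:ℝ) ≤ |l| := abs_nonneg l
    linarith

/-- Convex escape bound: on the part of a band strictly to the right of a point `x̄`
with value below the band, the derivative is uniformly bounded below. -/
lemma thm1aux_escape_bound (V : ℝ → ℝ) (hd : ∀ x, DifferentiableAt ℝ V x)
    (hconv : ConvexOn ℝ Set.univ V) {xb z d : ℝ} (hd0 : 0 < d) (hz : xb < z)
    (h1 : V xb + d / 2 ≤ V z) (h2 : V z ≤ V xb + 3 * d / 2) :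
    ∃ m > 0, ∀ x, xb < x → V xb + d / 2 ≤ V x → V x ≤ V xb + 3 * d / 2 →
      m ≤ deriv V x := by
  have hmono : ∀ x y : ℝ, x ≤ y → deriv V x ≤ deriv V y := fun x y h =>
    hconv.monotoneOn_deriv (fun u _ => hd u) (Set.mem_univ x) (Set.mem_univ y) h
  set m' := (V z - V xb) / (z - xb) with hm'def
  have hzxb : (0:ℝ) < z - xb := sub_pos.2 hz
  have hm' : 0 < m' := div_pos (by linarith) hzxb
  have hm'z : m' ≤ deriv V z := by
    have := hconv.slope_le_deriv (Set.mem_univ xb) (Set.mem_univ z) hz (hd z)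
    rwa [slope_def_field] at this
  set B := z + d / m' with hBdef
  have hdm' : 0 ≤ d / m' := le_of_lt (div_pos hd0 hm')
  have hzB : z ≤ B := by rw [hBdef]; linarith
  have hBxb : (0:ℝ) < B - xb := by linarith
  refine ⟨d / 2 / (B - xb), div_pos (by linarith) hBxb, fun x hx hlow hup => ?_⟩
  by_cases hxB : x ≤ B
  · have hs : (V x - V xb) / (x - xb) ≤ deriv V x := by
      have := hconv.slope_le_deriv (Set.mem_univ xb) (Set.mem_univ x) hx (hd x)
      rwa [slope_def_field] at this
    have h3 : d / 2 / (B - xb) ≤ (V x - V xb) / (x - xb) :=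
      div_le_div₀ (by linarith) (by linarith) (sub_pos.2 hx) (by linarith)
    linarith
  · have h3 : d / 2 / (B - xb) ≤ m' := by
      have : d / 2 / (B - xb) ≤ d / 2 / (z - xb) :=
        div_le_div₀ (by linarith) (le_refl _) hzxb (by linarith)
      have h4 : d / 2 / (z - xb) ≤ m' := div_le_div₀ (by linarith) (by linarith) hzxb le_rfl
      linarith
    have h5 : deriv V z ≤ deriv V x := hmono _ _ (by push_neg at hxB; linarith)
    linarith

/-- Barbalat-type lemma. -/
lemma thm1aux_barbalat {t₀ K : ℝ} (hK : 0 < K) {F f : ℝ → ℝ}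
    (hfd : ∀ t ∈ Set.Ici t₀, DifferentiableAt ℝ f t)
    (hder : ∀ t ∈ Set.Ici t₀, deriv f t = -F t)
    (hFnn : ∀ t ∈ Set.Ici t₀, 0 ≤ F t)
    (hfnn : ∀ t ∈ Set.Ici t₀, 0 ≤ f t)
    (hLip : ∀ s ∈ Set.Ici t₀, ∀ t ∈ Set.Ici t₀, |F s - F t| ≤ K * |s - t|) :
    Filter.Tendsto F Filter.atTop (nhds 0) := by
  rw [Metric.tendsto_atTop]
  intro ε hε
  by_contra hcon
  push_neg at hcon
  have hex : ∀ s : ℝ, ∃ t, max s t₀ ≤ t ∧ ε ≤ F t := by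
    intro s
    obtain ⟨t, ht1, ht2⟩ := hcon (max s t₀)
    refine ⟨t, ht1, ?_⟩
    have htt₀ : t₀ ≤ t := le_trans (le_max_right _ _) ht1
    rw [Real.dist_eq, sub_zero, abs_of_nonneg (hFnn t htt₀)] at ht2
    exact ht2
  set δ := ε / (2 * K) with hδdef
  have hδ : 0 < δ := div_pos hε (by linarith)
  -- on [t, t+δ], F stays ≥ ε/2
  have claim1 : ∀ t ∈ Set.Ici t₀, ε ≤ F t → ∀ s, t ≤ s → s ≤ t + δ → ε / 2 ≤ F s := by
    intro t ht hFt s hs1 hs2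
    have hst₀ : t₀ ≤ s := le_trans ht hs1
    have := hLip s hst₀ t ht
    have habs : |s - t| ≤ δ := by rw [abs_of_nonneg (by linarith)]; linarith
    have h2 : |F s - F t| ≤ K * δ := le_trans this (by nlinarith [abs_nonneg (s - t)])
    have h3 : K * δ = ε / 2 := by rw [hδdef, mul_div_assoc', mul_comm 2 K, mul_div_mul_left ε 2 (ne_of_gt hK)]
    rw [h3] at h2
    have := abs_le.mp h2
    linarith [this.1]
  -- antitone of f
  have hanti : AntitoneOn f (Set.Ici t₀) := by
    refine thm1aux_antitoneOn_Ici hfd (fun t ht => ?_)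
    rw [hder t ht]; linarith [hFnn t ht]
  -- decay step
  have claim3 : ∀ t ∈ Set.Ici t₀, ε ≤ F t → f (t + δ) ≤ f t - ε / 2 * δ := by
    intro t ht hFt
    have hsub : Set.Icc t (t + δ) ⊆ Set.Ici t₀ := fun s hs => le_trans ht hs.1
    have hanti2 : AntitoneOn (fun s => f s + ε / 2 * s) (Set.Icc t (t + δ)) := by
      refine antitoneOn_of_deriv_nonpos (convex_Icc _ _)
        (fun s hs => ((hfd s (hsub hs)).add
          (differentiableAt_fun_id.const_mul (ε / 2))).continuousAt.continuousWithinAt)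
        (fun s hs => ?_) (fun s hs => ?_)
      · have hs' : s ∈ Set.Icc t (t + δ) := interior_subset hs
        exact ((hfd s (hsub hs')).add
          (differentiableAt_fun_id.const_mul (ε / 2))).differentiableWithinAt
      · have hs' : s ∈ Set.Icc t (t + δ) := interior_subset hs
        have hds : deriv (fun s => f s + ε / 2 * s) s = deriv f s + ε / 2 := by
          rw [deriv_fun_add (hfd s (hsub hs')) (differentiableAt_fun_id.const_mul (ε / 2)),
            deriv_const_mul _ differentiableAt_fun_id, deriv_id'']
          ring
        rw [hds, hder s (hsub hs')]
        have := claim1 t ht hFt s hs'.1 hs'.2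
        linarith
    have := hanti2 (Set.left_mem_Icc.2 (by linarith)) (Set.right_mem_Icc.2 (by linarith))
      (by linarith : t ≤ t + δ)
    simp only at this
    linarith
  -- construct the sequence
  let u : ℕ → ℝ := fun n => Nat.rec (hex t₀).choose (fun _ p => (hex (p + δ)).choose) n
  have hu0 : max t₀ t₀ ≤ u 0 ∧ ε ≤ F (u 0) := (hex t₀).choose_spec
  have husucc : ∀ n, max (u n + δ) t₀ ≤ u (n + 1) ∧ ε ≤ F (u (n + 1)) := by
    intro n
    exact (hex (u n + δ)).choose_spec
  have huIci : ∀ n, t₀ ≤ u n := by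
    intro n
    cases n with
    | zero => exact le_trans (le_max_left _ _) hu0.1
    | succ m => exact le_trans (le_max_right _ _) (husucc m).1
  have huF : ∀ n, ε ≤ F (u n) := by
    intro n
    cases n with
    | zero => exact hu0.2
    | succ m => exact (husucc m).2
  have hustep : ∀ n, f (u (n + 1)) ≤ f (u n) - ε / 2 * δ := by
    intro n
    have h1 : u n + δ ≤ u (n + 1) := le_trans (le_max_left _ _) (husucc n).1
    have h2 : f (u (n + 1)) ≤ f (u n + δ) :=
      hanti (by simp [Set.mem_Ici]; linarith [huIci n, hδ])
        (Set.mem_Ici.2 (le_trans (by linarith [huIci n, hδ]) h1)) h1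
    have h3 := claim3 (u n) (huIci n) (huF n)
    linarith
  have hmain : ∀ n : ℕ, f (u n) ≤ f (u 0) - n * (ε / 2 * δ) := by
    intro n
    induction n with
    | zero => simp
    | succ m ih =>
      have := hustep m
      push_cast
      push_cast at ih
      linarith
  obtain ⟨n, hn⟩ := exists_nat_gt (f (u 0) / (ε / 2 * δ))
  have hpos : 0 < ε / 2 * δ := by positivity
  have h4 : f (u 0) < n * (ε / 2 * δ) := by
    rw [div_lt_iff₀ hpos] at hn; linarith
  have h5 := hmain n
  have h6 := hfnn (u n) (huIci n)
  linarith


set_option maxHeartbeats 2000000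

/-- Theorem 1, parts 2 and 3. For the Bianchi I (`k = 0`) and
Bianchi III (`k = −1`) universes with a `C¹`, convex, nonnegative potential `V`
(units `8πG = 1`), for solutions of the Einstein–Klein–Gordon evolution system
on `[t₀, ∞)` with `θ(t₀) ≥ 0` satisfying the scale-factor relation and the
constraint equation: as `t → ∞` one has `σ → 0`, `ψ → 0`, `k/b² → 0` and
`θ → √(3V₀)` where `V₀ = ⨅ x, V x`; in particular `θ → 0` for an exponential
potential `V(x) = V₀′·exp(−λx)` (`V₀′ > 0`, `λ > 0`). -/
theorem theorem1_parts2and3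
    (V : ℝ → ℝ) (hV : ContDiff ℝ 1 V)
    (hVconv : ConvexOn ℝ Set.univ V) (hVnn : ∀ x, 0 ≤ V x)
    (k : ℝ) (hk : k = 0 ∨ k = -1)
    (t₀ : ℝ) (θ σ φ ψ b : ℝ → ℝ)
    (hθ : ∀ t ∈ Set.Ici t₀, DifferentiableAt ℝ θ t)
    (hσ : ∀ t ∈ Set.Ici t₀, DifferentiableAt ℝ σ t)
    (hφ : ∀ t ∈ Set.Ici t₀, DifferentiableAt ℝ φ t)
    (hψ : ∀ t ∈ Set.Ici t₀, DifferentiableAt ℝ ψ t)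
    (hbd : ∀ t ∈ Set.Ici t₀, DifferentiableAt ℝ b t)
    (hbpos : ∀ t ∈ Set.Ici t₀, 0 < b t)
    (eθ : ∀ t ∈ Set.Ici t₀,
      deriv θ t = -(1 / 3) * θ t ^ 2 - 2 * σ t ^ 2 + V (φ t) - ψ t ^ 2)
    (eσ : ∀ t ∈ Set.Ici t₀,
      deriv σ t = -θ t ^ 2 / (3 * Real.sqrt 3) - θ t * σ t
        + σ t ^ 2 / Real.sqrt 3 + (1 / Real.sqrt 3) * (V (φ t) + ψ t ^ 2 / 2))
    (eφ : ∀ t ∈ Set.Ici t₀, deriv φ t = ψ t)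
    (eψ : ∀ t ∈ Set.Ici t₀, deriv ψ t = -θ t * ψ t - deriv V (φ t))
    (eb : ∀ t ∈ Set.Ici t₀,
      deriv b t / b t = (θ t - Real.sqrt 3 * σ t) / 3)
    (hcon : ∀ t ∈ Set.Ici t₀,
      (1 / 3) * θ t ^ 2 + k / b t ^ 2 = σ t ^ 2 + V (φ t) + ψ t ^ 2 / 2)
    (hθ₀ : 0 ≤ θ t₀) :
    Filter.Tendsto σ Filter.atTop (nhds 0) ∧
    Filter.Tendsto ψ Filter.atTop (nhds 0) ∧
    Filter.Tendsto (fun t => k / b t ^ 2) Filter.atTop (nhds 0) ∧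
    Filter.Tendsto θ Filter.atTop (nhds (Real.sqrt (3 * ⨅ x, V x))) ∧
    (∀ V₀' lam : ℝ, 0 < V₀' → 0 < lam →
      (∀ x, V x = V₀' * Real.exp (-lam * x)) →
      Filter.Tendsto θ Filter.atTop (nhds 0)) := by
  classical
  have hVd : ∀ x, DifferentiableAt ℝ V x := fun x => (hV.differentiable one_ne_zero) x
  have hk0 : k ≤ 0 := by rcases hk with h | h <;> simp [h]
  set g : ℝ → ℝ := fun t => -k / b t ^ 2 with hgdef
  have hgnn : ∀ t ∈ Set.Ici t₀, 0 ≤ g t := fun t ht =>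
    div_nonneg (by linarith) (sq_nonneg _)
  have hgeq : ∀ t ∈ Set.Ici t₀,
      g t = θ t ^ 2 / 3 - σ t ^ 2 - V (φ t) - ψ t ^ 2 / 2 := by
    intro t ht
    have h := hcon t ht
    have h2 : g t = -(k / b t ^ 2) := by rw [hgdef]; ring
    rw [h2]; linarith
  have s3sq : Real.sqrt 3 ^ 2 = 3 := Real.sq_sqrt (by norm_num)
  have s3pos : 0 < Real.sqrt 3 := Real.sqrt_pos.2 (by norm_num)
  have s3ge1 : 1 ≤ Real.sqrt 3 := by nlinarith
  have s3le2 : Real.sqrt 3 ≤ 2 := by nlinarith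
  set F : ℝ → ℝ := fun t => 3 * σ t ^ 2 + 3 / 2 * ψ t ^ 2 + g t with hFdef
  have hFnn : ∀ t ∈ Set.Ici t₀, 0 ≤ F t := by
    intro t ht
    have := hgnn t ht
    simp only [hFdef]
    nlinarith [sq_nonneg (σ t), sq_nonneg (ψ t)]
  have hθ' : ∀ t ∈ Set.Ici t₀, deriv θ t = -F t := by
    intro t ht
    rw [eθ t ht]
    have := hgeq t ht
    simp only [hFdef]
    linarith
  have hθanti : AntitoneOn θ (Set.Ici t₀) :=
    thm1aux_antitoneOn_Ici hθ (fun t ht => by rw [hθ' t ht]; linarith [hFnn t ht])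
  have hFle : ∀ t ∈ Set.Ici t₀, F t ≤ θ t ^ 2 := by
    intro t ht
    have h1 := hgeq t ht
    have h2 := hVnn (φ t)
    have h3 := hgnn t ht
    simp only [hFdef]
    linarith
  -- Step A : θ stays nonnegative
  have hθnn : ∀ t ∈ Set.Ici t₀, 0 ≤ θ t := by
    intro t₁ ht₁
    by_contra hneg
    push_neg at hneg
    have hcont : ∀ t ∈ Set.Ici t₀, ContinuousAt θ t := fun t ht => (hθ t ht).continuousAt
    have hconIcc : ContinuousOn θ (Set.Icc t₀ t₁) := fun t ht => (hcont t ht.1).continuousWithinAt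
    have hz0 : (0 : ℝ) ∈ Set.Icc (θ t₁) (θ t₀) := ⟨le_of_lt hneg, hθ₀⟩
    obtain ⟨s₀, hs₀, hθs₀⟩ := intermediate_value_Icc' ht₁ hconIcc hz0
    set Z := {t : ℝ | t ∈ Set.Icc t₀ t₁ ∧ θ t = 0} with hZdef
    have hZne : Z.Nonempty := ⟨s₀, hs₀, hθs₀⟩
    have hZbdd : BddAbove Z := ⟨t₁, fun t htz => htz.1.2⟩
    set ts := sSup Z with htsdef
    have htscl : ts ∈ closure Z := csSup_mem_closure hZne hZbdd
    have hZIcc : Z ⊆ Set.Icc t₀ t₁ := fun t htz => htz.1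
    have htsIcc : ts ∈ Set.Icc t₀ t₁ := isClosed_Icc.closure_subset ((closure_mono hZIcc) htscl)
    have hθts : θ ts = 0 := by
      obtain ⟨w, hw, hwt⟩ := mem_closure_iff_seq_limit.mp htscl
      have h1 : Tendsto (θ ∘ w) atTop (nhds (θ ts)) := (hcont ts htsIcc.1).tendsto.comp hwt
      have h2 : (θ ∘ w) = fun _ => (0 : ℝ) := funext fun n => (hw n).2
      rw [h2] at h1
      exact tendsto_nhds_unique h1 tendsto_const_nhds
    have htslt : ts < t₁ := by
      rcases lt_or_eq_of_le htsIcc.2 with h | h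
      · exact h
      · exfalso; rw [h] at hθts; linarith
    have hneg' : ∀ t, ts < t → t ≤ t₁ → θ t < 0 := by
      intro t h1 h2
      have htIci : t ∈ Set.Ici t₀ := le_trans htsIcc.1 (le_of_lt h1)
      have hle : θ t ≤ 0 := by
        have h3 := hθanti (Set.mem_Ici.2 htsIcc.1) htIci (le_of_lt h1)
        rw [hθts] at h3
        exact h3
      rcases lt_or_eq_of_le hle with h | h
      · exact h
      · exfalso
        have hmem : t ∈ Z := ⟨⟨htIci, h2⟩, h⟩
        have := le_csSup hZbdd hmem
        linarith
    set C := t₁ - ts - (θ t₁)⁻¹ with hCdef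
    have hinvneg : (θ t₁)⁻¹ < 0 := inv_lt_zero.2 hneg
    have hC : 0 < C := by rw [hCdef]; linarith
    have hkey : ∀ s, ts < s → s ≤ t₁ → 1 ≤ C * (-θ s) := by
      intro s hs1 hs2
      have hsub : Set.Icc s t₁ ⊆ Set.Ici t₀ :=
        fun r hr => le_trans htsIcc.1 (le_trans (le_of_lt hs1) hr.1)
      have hneg'' : ∀ r ∈ Set.Icc s t₁, θ r < 0 :=
        fun r hr => hneg' r (lt_of_lt_of_le hs1 hr.1) hr.2
      have hdiff : ∀ r ∈ Set.Icc s t₁, DifferentiableAt ℝ (fun y => y - (θ y)⁻¹) r :=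
        fun r hr => differentiableAt_fun_id.sub ((hθ r (hsub hr)).inv (ne_of_lt (hneg'' r hr)))
      have hderiv : ∀ r ∈ Set.Icc s t₁, 0 ≤ deriv (fun y => y - (θ y)⁻¹) r := by
        intro r hr
        have hne : θ r ≠ 0 := ne_of_lt (hneg'' r hr)
        have hD : HasDerivAt (fun y => y - (θ y)⁻¹) (1 - -deriv θ r / θ r ^ 2) r :=
          (hasDerivAt_id r).sub (((hθ r (hsub hr)).hasDerivAt).inv hne)
        rw [hD.deriv]
        have hθr2 : 0 < θ r ^ 2 := by positivity
        have h5 : -θ r ^ 2 ≤ deriv θ r := by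
          rw [hθ' r (hsub hr)]; linarith [hFle r (hsub hr)]
        have h6 : -deriv θ r / θ r ^ 2 ≤ 1 := by rw [div_le_one hθr2]; linarith
        linarith
      have hmon : MonotoneOn (fun y => y - (θ y)⁻¹) (Set.Icc s t₁) :=
        monotoneOn_of_deriv_nonneg (convex_Icc _ _)
          (fun r hr => (hdiff r hr).continuousAt.continuousWithinAt)
          (fun r hr => (hdiff r (interior_subset hr)).differentiableWithinAt)
          (fun r hr => hderiv r (interior_subset hr))
      have h7 := hmon (Set.left_mem_Icc.2 hs2) (Set.right_mem_Icc.2 hs2) hs2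
      simp only at h7
      have h8 : -(θ s)⁻¹ ≤ C := by rw [hCdef]; linarith
      have hpos : 0 < -θ s := neg_pos.2 (hneg'' s ⟨le_rfl, hs2⟩)
      rw [neg_inv] at h8
      calc (1 : ℝ) = (-θ s)⁻¹ * (-θ s) := (inv_mul_cancel₀ (ne_of_gt hpos)).symm
        _ ≤ C * (-θ s) := mul_le_mul_of_nonneg_right h8 (le_of_lt hpos)
    have hcontts : ContinuousAt θ ts := hcont ts htsIcc.1
    have hC2 : (0 : ℝ) < 1 / (2 * C) := by positivity
    obtain ⟨δ, hδ, hδball⟩ := Metric.continuousAt_iff.mp hcontts (1 / (2 * C)) hC2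
    set s := min (ts + δ / 2) ((ts + t₁) / 2) with hsdef
    have hs1 : ts < s := by rw [hsdef]; apply lt_min <;> linarith
    have hs2 : s ≤ t₁ := by
      rw [hsdef]
      calc min (ts + δ / 2) ((ts + t₁) / 2) ≤ (ts + t₁) / 2 := min_le_right _ _
        _ ≤ t₁ := by linarith
    have hsub2 : s ≤ ts + δ / 2 := by rw [hsdef]; exact min_le_left _ _
    have hsd : dist s ts < δ := by
      rw [Real.dist_eq, abs_of_pos (by linarith : (0 : ℝ) < s - ts)]
      linarith
    have h10 := hδball hsd
    rw [Real.dist_eq, hθts, sub_zero] at h10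
    have h11 := hkey s hs1 hs2
    have h12 : -θ s < 1 / (2 * C) := lt_of_le_of_lt (neg_le_abs _) h10
    have h13 : C * -θ s < C * (1 / (2 * C)) := (mul_lt_mul_iff_right₀ hC).2 h12
    have h14 : C * (1 / (2 * C)) = 1 / 2 := by field_simp
    rw [h14] at h13
    clear_value s C
    linarith [h11, h13]
  -- Step B : θ converges
  set M := θ t₀ with hMdef
  have hM0 : 0 ≤ M := hθ₀
  have hθleM : ∀ t ∈ Set.Ici t₀, θ t ≤ M := fun t ht => hθanti self_mem_Ici ht ht
  set gθ : ℝ → ℝ := fun t => θ (max t t₀) with hgθdef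
  have hgθanti : Antitone gθ := fun s t hst =>
    hθanti (le_max_right s t₀) (le_max_right t t₀) (max_le_max hst le_rfl)
  have hgθbdd : BddBelow (Set.range gθ) := by
    refine ⟨0, fun x hx => ?_⟩
    obtain ⟨t, ht⟩ := hx
    exact ht ▸ hθnn _ (Set.mem_Ici.2 (le_max_right _ _))
  have hgθlim : Tendsto gθ atTop (nhds (⨅ t, gθ t)) := tendsto_atTop_ciInf hgθanti hgθbdd
  set θinf := ⨅ t, gθ t with hθinfdef
  have hθeq : θ =ᶠ[atTop] gθ := by
    filter_upwards [eventually_ge_atTop t₀] with t ht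
    simp only [hgθdef, max_eq_left ht]
  have hθtends : Tendsto θ atTop (nhds θinf) := hgθlim.congr' hθeq.symm
  have hθinfnn : 0 ≤ θinf := by
    refine ge_of_tendsto hθtends ?_
    filter_upwards [eventually_ge_atTop t₀] with t ht
    exact hθnn t ht
  -- bounds
  have hbVψ : ∀ t ∈ Set.Ici t₀, V (φ t) + ψ t ^ 2 / 2 ≤ M ^ 2 := by
    intro t ht
    have h1 := hgeq t ht
    have h3 := hgnn t ht
    have h4 := hθleM t ht
    have h5 := hθnn t ht
    nlinarith [sq_nonneg (σ t)]
  have hbV : ∀ t ∈ Set.Ici t₀, V (φ t) ≤ M ^ 2 := fun t ht => by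
    nlinarith [hbVψ t ht, sq_nonneg (ψ t)]
  have hbσ : ∀ t ∈ Set.Ici t₀, |σ t| ≤ M := by
    intro t ht
    have h1 := hgeq t ht
    have h3 := hgnn t ht
    have h4 := hθleM t ht
    have h5 := hθnn t ht
    have h6 := hVnn (φ t)
    nlinarith [sq_abs (σ t), abs_nonneg (σ t), sq_nonneg (ψ t)]
  have hbψ : ∀ t ∈ Set.Ici t₀, |ψ t| ≤ M := by
    intro t ht
    have h1 := hgeq t ht
    have h3 := hgnn t ht
    have h4 := hθleM t ht
    have h5 := hθnn t ht
    have h6 := hVnn (φ t)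
    nlinarith [sq_abs (ψ t), abs_nonneg (ψ t), sq_nonneg (σ t)]
  have hbg : ∀ t ∈ Set.Ici t₀, g t ≤ M ^ 2 := by
    intro t ht
    have h1 := hgeq t ht
    have h4 := hθleM t ht
    have h5 := hθnn t ht
    have h6 := hVnn (φ t)
    nlinarith [sq_nonneg (σ t), sq_nonneg (ψ t)]
  have hbθ : ∀ t ∈ Set.Ici t₀, |θ t| ≤ M := fun t ht => by
    rw [abs_of_nonneg (hθnn t ht)]; exact hθleM t ht
  obtain ⟨KV, hKV0, hKV⟩ := thm1aux_convex_deriv_bound V hVd hVconv hVnn (M ^ 2)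
  -- derivative of g
  have hg' : ∀ t ∈ Set.Ici t₀,
      HasDerivAt g (-(2 / 3) * g t * (θ t - Real.sqrt 3 * σ t)) t := by
    intro t ht
    have hbne : b t ≠ 0 := ne_of_gt (hbpos t ht)
    have hb' : deriv b t = (θ t - Real.sqrt 3 * σ t) / 3 * b t := by
      have h := eb t ht
      rw [div_eq_iff hbne] at h
      exact h
    have hb := (hbd t ht).hasDerivAt
    have h1 : HasDerivAt (fun s => b s ^ 2) (2 * b t ^ 1 * deriv b t) t := by
      exact (hb.pow 2).congr_deriv (by norm_num)
    have hne2 : b t ^ 2 ≠ 0 := pow_ne_zero _ hbne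
    have h2 := h1.inv hne2
    have h3 := h2.const_mul (-k)
    have h4 : g = fun s => -k * (b s ^ 2)⁻¹ := by
      funext s; simp only [hgdef, div_eq_mul_inv]
    rw [h4]
    refine h3.congr_deriv ?_
    rw [hb']
    simp only [hgdef]
    field_simp
  have hgd : ∀ t ∈ Set.Ici t₀, DifferentiableAt ℝ g t :=
    fun t ht => (hg' t ht).differentiableAt
  have hgderiv : ∀ t ∈ Set.Ici t₀,
      deriv g t = -(2 / 3) * g t * (θ t - Real.sqrt 3 * σ t) :=
    fun t ht => (hg' t ht).deriv
  -- F differentiable with bounded derivative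
  have hFd : ∀ t ∈ Set.Ici t₀, DifferentiableAt ℝ F t := by
    intro t ht
    simp only [hFdef]
    exact ((((hσ t ht).pow 2).const_mul 3).add
      (((hψ t ht).pow 2).const_mul (3/2))).add (hgd t ht)
  have hFderiv : ∀ t ∈ Set.Ici t₀,
      deriv F t = 6 * σ t * deriv σ t + 3 * ψ t * deriv ψ t + deriv g t := by
    intro t ht
    have h1 : HasDerivAt (fun s => σ s ^ 2) (2 * σ t ^ 1 * deriv σ t) t := by
      exact ((hσ t ht).hasDerivAt.pow 2).congr_deriv (by norm_num)
    have h2 : HasDerivAt (fun s => ψ s ^ 2) (2 * ψ t ^ 1 * deriv ψ t) t := by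
      exact ((hψ t ht).hasDerivAt.pow 2).congr_deriv (by norm_num)
    have h3 := ((h1.const_mul (3 : ℝ)).add (h2.const_mul (3 / 2 : ℝ))).add
      ((hgd t ht).hasDerivAt)
    have h4 : HasDerivAt F (3 * (2 * σ t ^ 1 * deriv σ t) + 3 / 2 * (2 * ψ t ^ 1 * deriv ψ t)
        + deriv g t) t := by
      rw [hFdef]; exact h3
    rw [h4.deriv]
    ring
  set K := 29 * M ^ 3 + 3 * M * KV + 1 with hKdef
  have hKpos : 0 < K := by positivity
  have hFbnd : ∀ t ∈ Set.Ici t₀, |deriv F t| ≤ K := by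
    intro t ht
    have hθ2 : θ t ^ 2 ≤ M ^ 2 := by nlinarith [hθnn t ht, hθleM t ht]
    have hσ2 : σ t ^ 2 ≤ M ^ 2 := by
      nlinarith [hbσ t ht, abs_nonneg (σ t), sq_abs (σ t)]
    have hσ'bnd : |deriv σ t| ≤ 4 * M ^ 2 := by
      have e1 : |-θ t ^ 2 / (3 * Real.sqrt 3)| ≤ M ^ 2 := by
        rw [abs_div, abs_neg, abs_of_nonneg (sq_nonneg (θ t)),
          abs_of_pos (by positivity : (0:ℝ) < 3 * Real.sqrt 3)]
        calc θ t ^ 2 / (3 * Real.sqrt 3) ≤ θ t ^ 2 := div_le_self (sq_nonneg _) (by nlinarith)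
          _ ≤ M ^ 2 := hθ2
      have e2 : |θ t * σ t| ≤ M ^ 2 := by
        calc |θ t * σ t| = |θ t| * |σ t| := abs_mul _ _
          _ ≤ M * M := mul_le_mul (hbθ t ht) (hbσ t ht) (abs_nonneg _) hM0
          _ = M ^ 2 := (sq M).symm
      have e3 : |σ t ^ 2 / Real.sqrt 3| ≤ M ^ 2 := by
        rw [abs_div, abs_of_nonneg (sq_nonneg (σ t)), abs_of_pos s3pos]
        calc σ t ^ 2 / Real.sqrt 3 ≤ σ t ^ 2 := div_le_self (sq_nonneg _) s3ge1
          _ ≤ M ^ 2 := hσ2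
      have e4 : |1 / Real.sqrt 3 * (V (φ t) + ψ t ^ 2 / 2)| ≤ M ^ 2 := by
        have hX : 0 ≤ V (φ t) + ψ t ^ 2 / 2 := by linarith [hVnn (φ t), sq_nonneg (ψ t)]
        rw [abs_mul, abs_of_pos (by positivity : (0:ℝ) < 1 / Real.sqrt 3),
          abs_of_nonneg hX]
        have h13 : 1 / Real.sqrt 3 ≤ 1 := by
          rw [div_le_one s3pos]; exact s3ge1
        calc 1 / Real.sqrt 3 * (V (φ t) + ψ t ^ 2 / 2) ≤ 1 * (V (φ t) + ψ t ^ 2 / 2) :=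
              mul_le_mul_of_nonneg_right h13 hX
          _ = V (φ t) + ψ t ^ 2 / 2 := one_mul _
          _ ≤ M ^ 2 := hbVψ t ht
      have f1 := abs_le.mp e1
      have f2 := abs_le.mp e2
      have f3 := abs_le.mp e3
      have f4 := abs_le.mp e4
      rw [eσ t ht, abs_le]
      constructor <;> linarith
    have hψ'bnd : |deriv ψ t| ≤ M ^ 2 + KV := by
      have h1 : |deriv V (φ t)| ≤ KV := hKV _ (hbV t ht)
      have h2 : |θ t * ψ t| ≤ M ^ 2 := by
        calc |θ t * ψ t| = |θ t| * |ψ t| := abs_mul _ _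
          _ ≤ M * M := mul_le_mul (hbθ t ht) (hbψ t ht) (abs_nonneg _) hM0
          _ = M ^ 2 := (sq M).symm
      have f1 := abs_le.mp h1
      have f2 := abs_le.mp h2
      rw [eψ t ht, abs_le]
      constructor <;> linarith
    have hg'bnd : |deriv g t| ≤ 2 * M ^ 3 := by
      rw [hgderiv t ht]
      have h2 : |Real.sqrt 3 * σ t| ≤ 2 * M := by
        rw [abs_mul, abs_of_pos s3pos]
        nlinarith [abs_nonneg (σ t), hbσ t ht]
      have h1 : |θ t - Real.sqrt 3 * σ t| ≤ 3 * M := by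
        have f1 := abs_le.mp (hbθ t ht)
        have f2 := abs_le.mp h2
        rw [abs_le]; constructor <;> linarith
      have h0 : 0 ≤ g t := hgnn t ht
      have h3 : |(-(2 / 3) : ℝ) * g t * (θ t - Real.sqrt 3 * σ t)|
          = 2 / 3 * g t * |θ t - Real.sqrt 3 * σ t| := by
        rw [abs_mul, abs_mul, abs_neg, abs_of_nonneg h0]
        norm_num
      have h4 : g t * |θ t - Real.sqrt 3 * σ t| ≤ M ^ 2 * (3 * M) :=
        mul_le_mul (hbg t ht) h1 (abs_nonneg _) (by positivity)
      rw [h3]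
      linarith [h4]
    have p1 : |σ t * deriv σ t| ≤ M * (4 * M ^ 2) := by
      rw [abs_mul]
      exact mul_le_mul (hbσ t ht) hσ'bnd (abs_nonneg _) hM0
    have p2 : |ψ t * deriv ψ t| ≤ M * (M ^ 2 + KV) := by
      rw [abs_mul]
      exact mul_le_mul (hbψ t ht) hψ'bnd (abs_nonneg _) hM0
    have f1 := abs_le.mp p1
    have f2 := abs_le.mp p2
    have f3 := abs_le.mp hg'bnd
    rw [hFderiv t ht, abs_le, hKdef]
    constructor <;> linarith [hM0, hKV0, f1.1, f1.2, f2.1, f2.2, f3.1, f3.2]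
  have hLip : ∀ s ∈ Set.Ici t₀, ∀ t ∈ Set.Ici t₀, |F s - F t| ≤ K * |s - t| := by
    have hmono1 : MonotoneOn (fun t => K * t - F t) (Set.Ici t₀) := by
      refine thm1aux_monotoneOn_Ici
        (fun t ht => (differentiableAt_fun_id.const_mul K).sub (hFd t ht)) (fun t ht => ?_)
      have hder2 : deriv (fun t => K * t - F t) t = K - deriv F t := by
        rw [deriv_fun_sub (differentiableAt_fun_id.const_mul K) (hFd t ht),
          deriv_const_mul _ differentiableAt_fun_id, deriv_id'']
        ring
      rw [hder2]
      linarith [(abs_le.mp (hFbnd t ht)).2]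
    have hmono2 : MonotoneOn (fun t => K * t + F t) (Set.Ici t₀) := by
      refine thm1aux_monotoneOn_Ici
        (fun t ht => (differentiableAt_fun_id.const_mul K).add (hFd t ht)) (fun t ht => ?_)
      have hder2 : deriv (fun t => K * t + F t) t = K + deriv F t := by
        rw [deriv_fun_add (differentiableAt_fun_id.const_mul K) (hFd t ht),
          deriv_const_mul _ differentiableAt_fun_id, deriv_id'']
        ring
      rw [hder2]
      linarith [(abs_le.mp (hFbnd t ht)).1]
    intro s hs t ht
    rcases le_total s t with h | h
    · have h1 := hmono1 hs ht h
      have h2 := hmono2 hs ht h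
      simp only at h1 h2
      have habs : |s - t| = t - s := by rw [abs_of_nonpos (by linarith)]; ring
      rw [habs, abs_le]
      constructor <;> linarith [h1, h2]
    · have h1 := hmono1 ht hs h
      have h2 := hmono2 ht hs h
      simp only at h1 h2
      have habs : |s - t| = s - t := abs_of_nonneg (by linarith)
      rw [habs, abs_le]
      constructor <;> linarith [h1, h2]
  have hFtends : Tendsto F atTop (nhds 0) := thm1aux_barbalat hKpos hθ hθ' hFnn hθnn hLip
  -- individual limits
  have hσsq : Tendsto (fun t => σ t ^ 2) atTop (nhds 0) := by
    have hup : Tendsto (fun t => F t / 3) atTop (nhds 0) := by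
      simpa using hFtends.div_const 3
    refine tendsto_of_tendsto_of_tendsto_of_le_of_le' tendsto_const_nhds hup ?_ ?_
    · exact Filter.Eventually.of_forall fun t => sq_nonneg _
    · filter_upwards [eventually_ge_atTop t₀] with t ht
      have := hgnn t ht
      simp only [hFdef]
      nlinarith [sq_nonneg (ψ t)]
  have hψsq : Tendsto (fun t => ψ t ^ 2) atTop (nhds 0) := by
    have hup : Tendsto (fun t => F t / (3/2)) atTop (nhds 0) := by
      simpa using hFtends.div_const (3/2)
    refine tendsto_of_tendsto_of_tendsto_of_le_of_le' tendsto_const_nhds hup ?_ ?_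
    · exact Filter.Eventually.of_forall fun t => sq_nonneg _
    · filter_upwards [eventually_ge_atTop t₀] with t ht
      have := hgnn t ht
      rw [le_div_iff₀ (by norm_num : (0:ℝ) < 3/2)]
      simp only [hFdef]
      nlinarith [sq_nonneg (σ t)]
  have hgto : Tendsto g atTop (nhds 0) := by
    refine tendsto_of_tendsto_of_tendsto_of_le_of_le' tendsto_const_nhds hFtends ?_ ?_
    · filter_upwards [eventually_ge_atTop t₀] with t ht
      exact hgnn t ht
    · filter_upwards [eventually_ge_atTop t₀] with t ht
      simp only [hFdef]
      nlinarith [sq_nonneg (σ t), sq_nonneg (ψ t)]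
  have hσ0 : Tendsto σ atTop (nhds 0) := by
    rw [tendsto_zero_iff_abs_tendsto_zero]
    have h1 : Tendsto (fun t => Real.sqrt (σ t ^ 2)) atTop (nhds 0) := by
      have := (Real.continuous_sqrt.tendsto 0).comp hσsq
      rw [Real.sqrt_zero] at this; exact this
    exact (by simpa [Real.sqrt_sq_eq_abs] using h1 : Tendsto (fun t => |σ t|) atTop (nhds 0))
  have hψ0 : Tendsto ψ atTop (nhds 0) := by
    rw [tendsto_zero_iff_abs_tendsto_zero]
    have h1 : Tendsto (fun t => Real.sqrt (ψ t ^ 2)) atTop (nhds 0) := by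
      have := (Real.continuous_sqrt.tendsto 0).comp hψsq
      rw [Real.sqrt_zero] at this; exact this
    exact (by simpa [Real.sqrt_sq_eq_abs] using h1 : Tendsto (fun t => |ψ t|) atTop (nhds 0))
  have hkb : Tendsto (fun t => k / b t ^ 2) atTop (nhds 0) := by
    have h1 := hgto.neg
    rw [neg_zero] at h1
    refine h1.congr (fun t => ?_)
    simp only [hgdef]
    ring
  -- limit of V ∘ φ
  have hVφ : Tendsto (fun t => V (φ t)) atTop (nhds (θinf ^ 2 / 3)) := by
    have hmix : Tendsto (fun t => θ t ^ 2 / 3 - σ t ^ 2 - ψ t ^ 2 / 2 - g t) atTop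
        (nhds (θinf ^ 2 / 3 - 0 - 0 / 2 - 0)) :=
      (((hθtends.pow 2).div_const 3).sub hσsq).sub (hψsq.div_const 2) |>.sub hgto
    have h2 : θinf ^ 2 / 3 - 0 - 0 / 2 - 0 = θinf ^ 2 / 3 := by ring
    rw [h2] at hmix
    refine hmix.congr' ?_
    filter_upwards [eventually_ge_atTop t₀] with t ht
    have := hgeq t ht
    linarith
  have hbddV : BddBelow (Set.range V) := ⟨0, fun x hx => by obtain ⟨y, hy⟩ := hx; exact hy ▸ hVnn y⟩
  have hV₀leL : (⨅ x, V x) ≤ θinf ^ 2 / 3 :=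
    ge_of_tendsto hVφ (Filter.Eventually.of_forall fun t => ciInf_le hbddV (φ t))
  have hLleV₀ : θinf ^ 2 / 3 ≤ ⨅ x, V x := by
    by_contra hlt
    push_neg at hlt
    obtain ⟨xb, hxb⟩ := exists_lt_of_ciInf_lt hlt
    set L := θinf ^ 2 / 3 with hLdef
    set d := L - V xb with hddef
    have hd : 0 < d := by rw [hddef]; linarith
    have hband : ∀ᶠ t in atTop,
        V xb + d / 2 ≤ V (φ t) ∧ V (φ t) ≤ V xb + 3 * d / 2 := by
      have hev := Metric.tendsto_nhds.mp hVφ (d / 2) (by linarith)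
      filter_upwards [hev] with t ht
      rw [Real.dist_eq] at ht
      have h2 := abs_lt.mp ht
      have h3 : d = L - V xb := hddef
      have h4 : L = θinf ^ 2 / 3 := hLdef
      constructor <;> [linarith [h2.1]; linarith [h2.2]]
    obtain ⟨T₁, hT₁⟩ := eventually_atTop.mp hband
    set T := max t₀ T₁ with hTdef
    have hTt₀ : t₀ ≤ T := le_max_left _ _
    have hbandT : ∀ t, T ≤ t → V xb + d / 2 ≤ V (φ t) ∧ V (φ t) ≤ V xb + 3 * d / 2 :=
      fun t ht => hT₁ t (le_trans (le_max_right _ _) ht)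
    have hφne : ∀ t, T ≤ t → φ t ≠ xb := by
      intro t ht hc
      have h5 := (hbandT t ht).1
      rw [hc] at h5
      linarith
    have hφcont : ∀ t, T ≤ t → ContinuousAt φ t :=
      fun t ht => (hφ t (le_trans hTt₀ ht)).continuousAt
    have hside : (∀ t, T ≤ t → xb < φ t) ∨ (∀ t, T ≤ t → φ t < xb) := by
      rcases lt_or_gt_of_ne (hφne T le_rfl) with h | h
      · right
        intro t ht
        rcases lt_or_ge (φ t) xb with h2 | h2
        · exact h2
        exfalso
        have hcont2 : ContinuousOn φ (Set.Icc T t) :=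
          fun r hr => (hφcont r hr.1).continuousWithinAt
        obtain ⟨c, hc, hφc⟩ := intermediate_value_Icc ht hcont2 ⟨le_of_lt h, h2⟩
        exact hφne c hc.1 hφc
      · left
        intro t ht
        rcases lt_or_ge xb (φ t) with h2 | h2
        · exact h2
        exfalso
        have hcont2 : ContinuousOn φ (Set.Icc T t) :=
          fun r hr => (hφcont r hr.1).continuousWithinAt
        obtain ⟨c, hc, hφc⟩ := intermediate_value_Icc' ht hcont2 ⟨h2, le_of_lt h⟩
        exact hφne c hc.1 hφc
    rcases hside with hright | hleft
    · -- φ stays to the right of xb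
      have hzb : xb < φ T := hright T le_rfl
      obtain ⟨m, hm, hkey⟩ := thm1aux_escape_bound V hVd hVconv hd hzb
        (hbandT T le_rfl).1 (hbandT T le_rfl).2
      have hsm : ∀ᶠ t in atTop, |ψ t| < m / (2 * (M + 1)) := by
        have hev := Metric.tendsto_nhds.mp hψ0 (m / (2 * (M + 1)))
          (by positivity)
        filter_upwards [hev] with t ht
        rwa [Real.dist_eq, sub_zero] at ht
      obtain ⟨T₂', hT₂'⟩ := eventually_atTop.mp hsm
      set T₂ := max T T₂' with hT₂def
      have hT₂T : T ≤ T₂ := le_max_left _ _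
      have hderψ : ∀ t ∈ Set.Ici T₂, deriv ψ t ≤ -(m / 2) := by
        intro t ht
        have htT : T ≤ t := le_trans hT₂T ht
        have htt₀ : t₀ ≤ t := le_trans hTt₀ htT
        rw [eψ t htt₀]
        have h1 : m ≤ deriv V (φ t) :=
          hkey (φ t) (hright t htT) (hbandT t htT).1 (hbandT t htT).2
        have h2 : |ψ t| < m / (2 * (M + 1)) := hT₂' t (le_trans (le_max_right _ _) ht)
        have h3 : |θ t * ψ t| ≤ m / 2 := by
          rw [abs_mul]
          have h4 : |θ t| * |ψ t| ≤ M * (m / (2 * (M + 1))) :=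
            mul_le_mul (hbθ t htt₀) (le_of_lt h2) (abs_nonneg _) hM0
          have hM1 : (0 : ℝ) < M + 1 := by linarith
          have h6 : M / (M + 1) ≤ 1 := by rw [div_le_one hM1]; linarith
          have h5 : M * (m / (2 * (M + 1))) ≤ m / 2 := by
            calc M * (m / (2 * (M + 1))) = m / 2 * (M / (M + 1)) := by
                  field_simp
              _ ≤ m / 2 * 1 := mul_le_mul_of_nonneg_left h6 (by linarith)
              _ = m / 2 := mul_one _
          linarith
        have h7 := abs_le.mp h3
        linarith [h7.1, h7.2, h1]
      exact thm1aux_diverge (by linarith : (0 : ℝ) < m / 2)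
        (fun t ht => hψ t (le_trans hTt₀ (le_trans hT₂T ht))) hderψ hψ0
    · -- φ stays to the left of xb : reflect
      set W : ℝ → ℝ := fun y => V (-y) with hWdef
      have hWd : ∀ y, DifferentiableAt ℝ W y := by
        intro y
        have h1 : DifferentiableAt ℝ (V ∘ fun y : ℝ => -y) y :=
          (hVd (-y)).comp y differentiableAt_fun_id.neg
        exact h1
      have hWconv : ConvexOn ℝ Set.univ W := by
        refine ⟨convex_univ, fun x _ y _ a c ha hc hac => ?_⟩
        have h1 := hVconv.2 (Set.mem_univ (-x)) (Set.mem_univ (-y)) ha hc hac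
        simp only [smul_eq_mul] at h1 ⊢
        simp only [hWdef]
        have heq : -(a * x + c * y) = a * -x + c * -y := by ring
        rw [heq]
        exact h1
      have hWder : ∀ y : ℝ, deriv W y = -deriv V (-y) := by
        intro y
        rw [hWdef]
        exact deriv_comp_neg (f := V) (x := y)
      have hzb : -xb < -φ T := by have h1 := hleft T le_rfl; linarith
      have hWband : ∀ t, T ≤ t →
          W (-xb) + d / 2 ≤ W (-φ t) ∧ W (-φ t) ≤ W (-xb) + 3 * d / 2 := by
        intro t ht
        have h1 := hbandT t ht
        simp only [hWdef, neg_neg]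
        exact h1
      obtain ⟨m, hm, hkey⟩ := thm1aux_escape_bound W hWd hWconv hd hzb
        (hWband T le_rfl).1 (hWband T le_rfl).2
      have hkey' : ∀ t, T ≤ t → deriv V (φ t) ≤ -m := by
        intro t ht
        have h1 := hkey (-φ t) (by have := hleft t ht; linarith)
          (hWband t ht).1 (hWband t ht).2
        rw [hWder (-φ t), neg_neg] at h1
        linarith
      have hsm : ∀ᶠ t in atTop, |ψ t| < m / (2 * (M + 1)) := by
        have hev := Metric.tendsto_nhds.mp hψ0 (m / (2 * (M + 1)))
          (by positivity)
        filter_upwards [hev] with t ht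
        rwa [Real.dist_eq, sub_zero] at ht
      obtain ⟨T₂', hT₂'⟩ := eventually_atTop.mp hsm
      set T₂ := max T T₂' with hT₂def
      have hT₂T : T ≤ T₂ := le_max_left _ _
      have hderψ : ∀ t ∈ Set.Ici T₂, deriv (fun s => -ψ s) t ≤ -(m / 2) := by
        intro t ht
        have htT : T ≤ t := le_trans hT₂T ht
        have htt₀ : t₀ ≤ t := le_trans hTt₀ htT
        have hdn : deriv (fun s => -ψ s) t = -deriv ψ t :=
          deriv.neg
        rw [hdn, eψ t htt₀]
        have h1 : deriv V (φ t) ≤ -m := hkey' t htT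
        have h2 : |ψ t| < m / (2 * (M + 1)) := hT₂' t (le_trans (le_max_right _ _) ht)
        have h3 : |θ t * ψ t| ≤ m / 2 := by
          rw [abs_mul]
          have h4 : |θ t| * |ψ t| ≤ M * (m / (2 * (M + 1))) :=
            mul_le_mul (hbθ t htt₀) (le_of_lt h2) (abs_nonneg _) hM0
          have hM1 : (0 : ℝ) < M + 1 := by linarith
          have h6 : M / (M + 1) ≤ 1 := by rw [div_le_one hM1]; linarith
          have h5 : M * (m / (2 * (M + 1))) ≤ m / 2 := by
            calc M * (m / (2 * (M + 1))) = m / 2 * (M / (M + 1)) := by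
                  field_simp
              _ ≤ m / 2 * 1 := mul_le_mul_of_nonneg_left h6 (by linarith)
              _ = m / 2 := mul_one _
          linarith
        have h7 := abs_le.mp h3
        linarith [h7.1, h7.2, h1]
      have hψ0n : Tendsto (fun s => -ψ s) atTop (nhds 0) := by
        have h1 := hψ0.neg
        rwa [neg_zero] at h1
      exact thm1aux_diverge (by linarith : (0 : ℝ) < m / 2)
        (fun t ht => (hψ t (le_trans hTt₀ (le_trans hT₂T ht))).neg) hderψ hψ0n
  have hLV : θinf ^ 2 / 3 = ⨅ x, V x := le_antisymm hLleV₀ hV₀leL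
  have h4 : Tendsto θ atTop (nhds (Real.sqrt (3 * ⨅ x, V x))) := by
    have h5 : Real.sqrt (3 * ⨅ x, V x) = θinf := by
      have h6 : 3 * (⨅ x, V x) = θinf ^ 2 := by rw [← hLV]; ring
      rw [h6, Real.sqrt_sq hθinfnn]
    rwa [h5]
  refine ⟨hσ0, hψ0, hkb, h4, ?_⟩
  intro V₀' lam hV₀' hlam hVexp
  have hinf0 : (⨅ x, V x) = 0 := by
    refine le_antisymm ?_ (le_ciInf fun x => hVnn x)
    by_contra hpos
    push_neg at hpos
    set c := ⨅ x, V x with hcdef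
    have hx : ∃ x : ℝ, V x < c := by
      refine ⟨-Real.log (c / V₀') / lam + 1, ?_⟩
      rw [hVexp]
      have hlamne : lam ≠ 0 := ne_of_gt hlam
      have harg : -lam * (-Real.log (c / V₀') / lam + 1) = Real.log (c / V₀') - lam := by
        field_simp
        ring
      rw [harg]
      have h7 : Real.exp (Real.log (c / V₀') - lam) < Real.exp (Real.log (c / V₀')) :=
        Real.exp_lt_exp.2 (by linarith)
      rw [Real.exp_log (div_pos hpos hV₀')] at h7
      calc V₀' * Real.exp (Real.log (c / V₀') - lam) < V₀' * (c / V₀') :=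
            (mul_lt_mul_iff_right₀ hV₀').2 h7
        _ = c := by field_simp
    obtain ⟨x, hx⟩ := hx
    exact absurd (ciInf_le hbddV x) (not_le.2 hx)
  rw [hinf0] at h4
  simpa using h4
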